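/- Let u ∈ ℂ with |u| = 1 and u³ ≠ 1, and let τ, τ′ ∈ ℂ. Then there exists a nonzero Hermitian 3×3 matrix K with R₁ᴴ K R₁ = K and Jᴴ K J = K if and only if τ′ = −u·conj(τ). Moreover, when τ′ = −u·conj(τ), every Hermitian matrix K satisfying R₁ᴴ K R₁ = K and Jᴴ K J = K is a real scalar multiple of the matrix H. -/

import Mathlib

open Matrix

noncomputable section

/-- The matrix R₁ = [[u², τ, τ′], [0, conj u, 0], [0, 0, conj u]]. -/
def R₁ (u τ τ' : ℂ) : Matrix (Fin 3) (Fin 3) ℂ :=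
  !![u ^ 2, τ, τ'; 0, starRingEnd ℂ u, 0; 0, 0, starRingEnd ℂ u]

/-- The matrix Jmat = [[0,0,1],[1,0,0],[0,1,0]]. -/
def Jmat : Matrix (Fin 3) (Fin 3) ℂ := !![0, 0, 1; 1, 0, 0; 0, 1, 0]

/-- The Hermitian matrix H with α = 2 − u³ − conj(u)³ and β = (conj(u)² − u)τ. -/
def H (u τ : ℂ) : Matrix (Fin 3) (Fin 3) ℂ :=
  let α : ℂ := 2 - u ^ 3 - (starRingEnd ℂ u) ^ 3
  let β : ℂ := ((starRingEnd ℂ u) ^ 2 - u) * τ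
  !![α, β, starRingEnd ℂ β; starRingEnd ℂ β, α, β; β, starRingEnd ℂ β, α]

lemma key_struct (u τ τ' : ℂ) (K : Matrix (Fin 3) (Fin 3) ℂ) (hK : Kᴴ = K)
    (hR : (R₁ u τ τ')ᴴ * K * R₁ u τ τ' = K) (hJ : Jmatᴴ * K * Jmat = K) :
    (K = !![K 0 0, K 0 1, starRingEnd ℂ (K 0 1);
            starRingEnd ℂ (K 0 1), K 0 0, K 0 1;
            K 0 1, starRingEnd ℂ (K 0 1), K 0 0]) ∧
    starRingEnd ℂ (K 0 0) = K 0 0 ∧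
    (starRingEnd ℂ u)^2 * K 0 0 * τ + (starRingEnd ℂ u)^3 * K 0 1 = K 0 1 ∧
    (starRingEnd ℂ u)^2 * K 0 0 * τ' + (starRingEnd ℂ u)^3 * starRingEnd ℂ (K 0 1) = starRingEnd ℂ (K 0 1) := by
  have j00 := congrFun (congrFun hJ 0) 0
  have j11 := congrFun (congrFun hJ 1) 1
  have j01 := congrFun (congrFun hJ 0) 1
  have j20 := congrFun (congrFun hJ 2) 0
  simp [Jmat, Matrix.mul_apply, Fin.sum_univ_three, Matrix.conjTranspose_apply,
    Matrix.vecHead, Matrix.vecTail] at j00 j11 j01 j20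
  have h00 := congrFun (congrFun hK 0) 0
  have h10 := congrFun (congrFun hK 1) 0
  have h21 := congrFun (congrFun hK 2) 1
  have h02 := congrFun (congrFun hK 0) 2
  simp [Matrix.conjTranspose_apply] at h00 h10 h21 h02
  have r01 := congrFun (congrFun hR 0) 1
  have r02 := congrFun (congrFun hR 0) 2
  simp [R₁, Matrix.mul_apply, Fin.sum_univ_three, Matrix.conjTranspose_apply,
    Matrix.vecHead, Matrix.vecTail] at r01 r02
  refine ⟨?_, h00, by linear_combination r01, ?_⟩
  · ext i j
    fin_cases i <;> fin_cases j <;>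
      simp [j00, j11, j01, j20, h00, h10, h21, h02]
    · rw [← h10, ← h02, ← j20]
    · rw [← h21, j01, ← h02, ← j20]
  · have e02 : K 0 2 = starRingEnd ℂ (K 0 1) := by rw [← h02, ← j20]
    rw [e02] at r02
    linear_combination r02

lemma HJ (u τ : ℂ) : Jmatᴴ * H u τ * Jmat = H u τ := by
  ext i j
  fin_cases i <;> fin_cases j <;>
    simp [H, Jmat, Matrix.mul_apply, Fin.sum_univ_three, Matrix.conjTranspose_apply,
      Matrix.vecHead, Matrix.vecTail]

lemma Hherm (u τ : ℂ) : (H u τ)ᴴ = H u τ := by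
  ext i j
  fin_cases i <;> fin_cases j <;>
    simp [H, Matrix.conjTranspose_apply, Matrix.vecHead, Matrix.vecTail,
      _root_.map_mul, map_sub, map_pow, Complex.conj_conj] <;> ring

lemma H_eq (u τ : ℂ) : H u τ =
    !![2 - u ^ 3 - (starRingEnd ℂ u) ^ 3, ((starRingEnd ℂ u) ^ 2 - u) * τ,
        starRingEnd ℂ (((starRingEnd ℂ u) ^ 2 - u) * τ);
      starRingEnd ℂ (((starRingEnd ℂ u) ^ 2 - u) * τ), 2 - u ^ 3 - (starRingEnd ℂ u) ^ 3,
        ((starRingEnd ℂ u) ^ 2 - u) * τ;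
      ((starRingEnd ℂ u) ^ 2 - u) * τ, starRingEnd ℂ (((starRingEnd ℂ u) ^ 2 - u) * τ),
        2 - u ^ 3 - (starRingEnd ℂ u) ^ 3] := rfl

set_option maxHeartbeats 1000000 in
lemma HR (u τ : ℂ) (huv : u * starRingEnd ℂ u = 1) :
    (R₁ u τ (-u * starRingEnd ℂ τ))ᴴ * H u τ * R₁ u τ (-u * starRingEnd ℂ τ) = H u τ := by
  ext i j
  fin_cases i <;> fin_cases j <;>
    simp [H_eq, R₁, Matrix.mul_apply, Fin.sum_univ_three, Matrix.conjTranspose_apply,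
      Matrix.vecHead, Matrix.vecTail, _root_.map_mul, map_sub, map_pow,
      Complex.conj_conj]
  · linear_combination ((2 - (starRingEnd ℂ u)^3 + 2*u*(starRingEnd ℂ u) - u*(starRingEnd ℂ u)^4 - u^3 - u^4*(starRingEnd ℂ u))) * huv
  · linear_combination ((-((starRingEnd ℂ u)^2*τ) - u*τ - u^2*(starRingEnd ℂ u)*τ)) * huv
  · linear_combination ((-((starRingEnd ℂ u)*(starRingEnd ℂ τ)) + (starRingEnd ℂ u)^4*(starRingEnd ℂ τ) + u*(starRingEnd ℂ u)^2*(starRingEnd ℂ τ) + u^2*(starRingEnd ℂ τ) + u^3*(starRingEnd ℂ u)*(starRingEnd ℂ τ))) * huv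
  · linear_combination ((-((starRingEnd ℂ u)*(starRingEnd ℂ τ)) - u*(starRingEnd ℂ u)^2*(starRingEnd ℂ τ) - u^2*(starRingEnd ℂ τ))) * huv
  · linear_combination ((2 - 2*τ*(starRingEnd ℂ τ) - (starRingEnd ℂ u)^3 - u^3)) * huv
  · linear_combination (((starRingEnd ℂ u)^2*(starRingEnd ℂ τ)^2 + (starRingEnd ℂ u)^2*τ + 2*u*(starRingEnd ℂ τ)^2 - u*τ)) * huv
  · linear_combination (((starRingEnd ℂ u)^2*τ - u*τ + u*(starRingEnd ℂ u)^3*τ + u^2*(starRingEnd ℂ u)*τ + u^4*τ)) * huv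
  · linear_combination ((-((starRingEnd ℂ u)*(starRingEnd ℂ τ)) + 2*(starRingEnd ℂ u)*τ^2 + u^2*(starRingEnd ℂ τ) + u^2*τ^2)) * huv
  · linear_combination ((2 - (starRingEnd ℂ u)^3 - (starRingEnd ℂ u)^3*τ*(starRingEnd ℂ τ) - 2*u*(starRingEnd ℂ u)*τ*(starRingEnd ℂ τ) - u^3 - u^3*τ*(starRingEnd ℂ τ))) * huv


/-- existence of a nonzero invariant Hermitian form iff τ′ = −u·conj(τ),
and uniqueness up to real scalar in that case. -/
theorem stmt_1 (u τ τ' : ℂ) (hu : ‖u‖ = 1) (hu3 : u ^ 3 ≠ 1) :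
    ((∃ K : Matrix (Fin 3) (Fin 3) ℂ, K ≠ 0 ∧ Kᴴ = K ∧
        (R₁ u τ τ')ᴴ * K * R₁ u τ τ' = K ∧ Jmatᴴ * K * Jmat = K) ↔
      τ' = -u * starRingEnd ℂ τ) ∧
    (τ' = -u * starRingEnd ℂ τ →
      ∀ K : Matrix (Fin 3) (Fin 3) ℂ, Kᴴ = K →
        (R₁ u τ τ')ᴴ * K * R₁ u τ τ' = K → Jmatᴴ * K * Jmat = K →
        ∃ c : ℝ, K = (c : ℂ) • H u τ) := by
  have huv : u * starRingEnd ℂ u = 1 := by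
    rw [Complex.mul_conj, Complex.normSq_eq_norm_sq, hu]; norm_num
  have hv3 : (1 : ℂ) - (starRingEnd ℂ u) ^ 3 ≠ 0 := by
    rw [sub_ne_zero]
    intro h
    apply hu3
    have := congrArg (starRingEnd ℂ) h
    simpa using this.symm
  have hu3' : (1 : ℂ) - u ^ 3 ≠ 0 := by rw [sub_ne_zero]; exact fun h => hu3 h.symm
  have hαfact : (2 : ℂ) - u ^ 3 - (starRingEnd ℂ u) ^ 3
      = (1 - u ^ 3) * (1 - (starRingEnd ℂ u) ^ 3) := by
    linear_combination (-(u^2*(starRingEnd ℂ u)^2 + u*(starRingEnd ℂ u) + 1)) * huv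
  have hαne : (2 : ℂ) - u ^ 3 - (starRingEnd ℂ u) ^ 3 ≠ 0 := by
    rw [hαfact]; exact mul_ne_zero hu3' hv3
  constructor
  · constructor
    · rintro ⟨K, hK0, hK, hR, hJ⟩
      obtain ⟨hKform, hreal, e1, e2⟩ := key_struct u τ τ' K hK hR hJ
      have ha0 : K 0 0 ≠ 0 := by
        intro ha
        apply hK0
        have hb0 : K 0 1 = 0 := by
          have : K 0 1 * (1 - (starRingEnd ℂ u)^3) = 0 := by
            rw [ha] at e1; linear_combination -e1
          exact (mul_eq_zero.mp this).resolve_right hv3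
        rw [hKform, ha, hb0]
        ext i j
        fin_cases i <;> fin_cases j <;> simp [Matrix.vecHead, Matrix.vecTail]
      have e1c := congrArg (starRingEnd ℂ) e1
      simp only [map_add, _root_.map_mul, map_pow, Complex.conj_conj, hreal] at e1c
      -- e1c : u^2 * K 0 0 * conj τ + u^3 * conj (K 0 1) = conj (K 0 1)
      have hcb : (1 - u^3) * starRingEnd ℂ (K 0 1) = u^2 * K 0 0 * starRingEnd ℂ τ := by
        linear_combination -e1c
      have hcb2 : (1 - (starRingEnd ℂ u)^3) * starRingEnd ℂ (K 0 1)
          = (starRingEnd ℂ u)^2 * K 0 0 * τ' := by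
        linear_combination -e2
      have hA : K 0 0 * ((1 - u^3) * (starRingEnd ℂ u)^2 * τ'
          - (1 - (starRingEnd ℂ u)^3) * u^2 * starRingEnd ℂ τ) = 0 := by
        linear_combination (1 - (starRingEnd ℂ u)^3) * hcb - (1 - u^3) * hcb2
      have hB : (1 - u^3) * (starRingEnd ℂ u)^2 * τ'
          - (1 - (starRingEnd ℂ u)^3) * u^2 * starRingEnd ℂ τ = 0 :=
        (mul_eq_zero.mp hA).resolve_left ha0
      have hfac : (u^2 - starRingEnd ℂ u) * (τ' + u * starRingEnd ℂ τ) = 0 := by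
        linear_combination (-u) * hB +
          ((starRingEnd ℂ u)*τ' + u*(starRingEnd ℂ u)*(starRingEnd ℂ τ) - u^2*τ'
            + u^2*(starRingEnd ℂ u)^2*(starRingEnd ℂ τ) - u^3*(starRingEnd ℂ u)*τ') * huv
      have hne : u^2 - starRingEnd ℂ u ≠ 0 := by
        rw [sub_ne_zero]
        intro h
        apply hu3
        linear_combination huv + u * h
      have := (mul_eq_zero.mp hfac).resolve_left hne
      linear_combination this
    · intro ht
      refine ⟨H u τ, ?_, Hherm u τ, by rw [ht]; exact HR u τ huv, HJ u τ⟩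
      intro h
      apply hαne
      have := congrFun (congrFun h 0) 0
      simpa [H_eq] using this
  · intro ht K hK hR hJ
    obtain ⟨hKform, hreal, e1, e2⟩ := key_struct u τ τ' K hK hR hJ
    have hb : K 0 1 * ((2:ℂ) - u^3 - (starRingEnd ℂ u)^3)
        = K 0 0 * (((starRingEnd ℂ u)^2 - u) * τ) := by
      linear_combination (1 - u^3) * (by linear_combination -e1 :
          K 0 1 * (1 - (starRingEnd ℂ u)^3) = (starRingEnd ℂ u)^2 * K 0 0 * τ) +
        (-(K 0 1) - u*τ*(K 0 0) - u*(starRingEnd ℂ u)*(K 0 1)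
          - u^2*(starRingEnd ℂ u)*τ*(K 0 0) - u^2*(starRingEnd ℂ u)^2*(K 0 1)) * huv
    have hbc := congrArg (starRingEnd ℂ) hb
    simp only [_root_.map_mul, map_sub, map_pow, map_ofNat, Complex.conj_conj, hreal] at hbc
    -- hbc : conj (K 0 1) * (2 - conj u ^3 - u^3) = K 0 0 * ((u^2 - conj u) * conj τ)
    have hαreal : ((((2:ℂ) - u^3 - (starRingEnd ℂ u)^3).re : ℝ) : ℂ)
        = (2:ℂ) - u^3 - (starRingEnd ℂ u)^3 := by
      rw [← Complex.conj_eq_iff_re]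
      simp only [map_sub, map_pow, map_ofNat, Complex.conj_conj]
      ring
    have hareal : (((K 0 0).re : ℝ) : ℂ) = K 0 0 := by
      rw [← Complex.conj_eq_iff_re]; exact hreal
    refine ⟨(K 0 0).re / ((2:ℂ) - u^3 - (starRingEnd ℂ u)^3).re, ?_⟩
    have hc : ((((K 0 0).re / ((2:ℂ) - u^3 - (starRingEnd ℂ u)^3).re : ℝ)) : ℂ)
        = K 0 0 / ((2:ℂ) - u^3 - (starRingEnd ℂ u)^3) := by
      push_cast
      rw [hαreal, hareal]
    rw [hc]
    conv_lhs => rw [hKform]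
    ext i j
    fin_cases i <;> fin_cases j <;>
      simp [H_eq, Matrix.vecHead, Matrix.vecTail] <;>
      rw [div_mul_eq_mul_div, eq_div_iff hαne]
    all_goals first
      | exact hb
      | linear_combination hbc

end
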